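/- Let G ⊆ M₂(ℝ̄) be a subsemigroup that is a group under ⊗ (its identity element being some idempotent of M₂(ℝ̄), not necessarily the identity matrix). Then either G is torsion-free abelian, or G contains a torsion-free abelian subgroup of index 2. Consequently, every group admitting a faithful representation by 2 × 2 tropical matrices is torsion-free abelian or has a torsion-free abelian subgroup of index 2. -/

import Mathlib

open scoped Classical ENNReal

/-- The tropical semiring `ℝ̄ = ℝ ∪ {-∞}`, carried by `WithBot ℝ`;
tropical addition is `max` and tropical multiplication is `+`. -/
abbrev Rb : Type := WithBot ℝ

/-- Tropical matrix multiplication. -/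
noncomputable def tMul {n : ℕ} (A B : Fin n → Fin n → Rb) : Fin n → Fin n → Rb :=
  fun i j => Finset.univ.sup fun k => A i k + B k j

/-- The column space of a matrix: all tropical linear combinations of its columns. -/
def ColSpace {n : ℕ} (A : Fin n → Fin n → Rb) : Set (Fin n → Rb) :=
  {v | ∃ c : Fin n → Rb, ∀ i, v i = Finset.univ.sup fun j => c j + A i j}

/-- The row space of a matrix: all tropical linear combinations of its rows. -/
def RowSpace {n : ℕ} (A : Fin n → Fin n → Rb) : Set (Fin n → Rb) :=
  {v | ∃ c : Fin n → Rb, ∀ j, v j = Finset.univ.sup fun i => c i + A i j}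

abbrev Mat2 : Type := Fin 2 → Fin 2 → Rb

/-- Inclusion of `ℝ̄` into the projective line `ℝ̂ = ℝ ∪ {-∞, +∞}` (modelled by `EReal`). -/
noncomputable def toE : Rb → EReal := WithBot.recBotCoe ⊥ (fun r : ℝ => (r : EReal))

/-- Projection of a vector `(a, b)` to `b - a ∈ ℝ̂`. -/
noncomputable def projPt (v : Fin 2 → Rb) : EReal := toE (v 1) - toE (v 0)

def zeroVec : Fin 2 → Rb := fun _ => ⊥

/-- Projective column space. -/
noncomputable def PC (A : Mat2) : Set EReal :=
  {z | ∃ v ∈ ColSpace A, v ≠ zeroVec ∧ projPt v = z}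

/-- Projective row space. -/
noncomputable def PR (A : Mat2) : Set EReal :=
  {z | ∃ v ∈ RowSpace A, v ≠ zeroVec ∧ projPt v = z}

/-- The metric `δ` on `ℝ̂`. -/
noncomputable def delta (x y : EReal) : ℝ≥0∞ :=
  if (∃ a : ℝ, x = (a : EReal)) ∧ (∃ b : ℝ, y = (b : EReal)) then
    ENNReal.ofReal |x.toReal - y.toReal|
  else if x = y then 0 else ⊤

/-- `M` embeds isometrically into `N`. -/
def IsomEmbed (M N : Set EReal) : Prop :=
  ∃ f : EReal → EReal, Set.MapsTo f M N ∧ Set.InjOn f M ∧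
    ∀ x ∈ M, ∀ y ∈ M, delta (f x) (f y) = delta x y

/-- `M` and `N` are isometric. -/
def Isom (M N : Set EReal) : Prop :=
  ∃ f : EReal → EReal, Set.BijOn f M N ∧
    ∀ x ∈ M, ∀ y ∈ M, delta (f x) (f y) = delta x y

/-- Closed convex subsets of `ℝ̂`: the empty set, singletons and closed intervals. -/
def IsClosedConvex (S : Set EReal) : Prop :=
  S = ∅ ∨ ∃ x y : EReal, x ≤ y ∧ S = Set.Icc x y

/-- A subsemigroup `G` of `M₂(ℝ̄)` which is a group under `⊗` with identity `E` (an
idempotent of `M₂(ℝ̄)`, not necessarily the identity matrix). -/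
noncomputable def IsGroupWith (G : Set Mat2) (E : Mat2) : Prop :=
  E ∈ G ∧ (∀ A ∈ G, ∀ B ∈ G, tMul A B ∈ G) ∧
    (∀ A ∈ G, tMul E A = A ∧ tMul A E = A) ∧
    (∀ A ∈ G, ∃ B ∈ G, tMul A B = E ∧ tMul B A = E)

/-- `tpow A n = A^(n+1)`, the `(n+1)`-st tropical power of `A`. -/
noncomputable def tpow (A : Mat2) : ℕ → Mat2
  | 0 => A
  | n + 1 => tMul A (tpow A n)

/-- A subset is abelian under `⊗`. -/
noncomputable def IsAbelianOn (G : Set Mat2) : Prop :=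
  ∀ A ∈ G, ∀ B ∈ G, tMul A B = tMul B A

/-- A group `(G, ⊗, E)` is torsion-free: no nonidentity element has a positive power
equal to the identity. -/
noncomputable def IsTorsionFreeOn (G : Set Mat2) (E : Mat2) : Prop :=
  ∀ A ∈ G, ∀ n : ℕ, tpow A n = E → A = E

/-- Old Mathlib `Monoid.IsTorsionFree` (removed upstream): no nontrivial element has
finite order. -/
def Monoid.IsTorsionFree (G : Type*) [Monoid G] : Prop :=
  ∀ g : G, g ≠ 1 → ¬IsOfFinOrder g

lemma sup2 (f : Fin 2 → Rb) : Finset.univ.sup f = max (f 0) (f 1) := by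
  rw [show (Finset.univ : Finset (Fin 2)) = {0, 1} by decide]
  simp [Finset.sup_insert, max_def]

lemma tMul_ent (A B : Mat2) (i j : Fin 2) :
    tMul A B i j = max (A i 0 + B 0 j) (A i 1 + B 1 j) := by
  simp [tMul, sup2]

/-- scalar multiple -/
noncomputable def sc (l : Rb) (A : Mat2) : Mat2 := fun i j => l + A i j

lemma sc_tMul (l : Rb) (A B : Mat2) : tMul (sc l A) B = sc l (tMul A B) := by
  funext i j
  simp only [tMul_ent, sc]
  rw [add_assoc, add_assoc, max_add_add_left]

lemma tMul_sc (l : Rb) (A B : Mat2) : tMul A (sc l B) = sc l (tMul A B) := by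
  funext i j
  simp only [tMul_ent, sc]
  rw [add_left_comm, add_left_comm (A i 1), max_add_add_left]

lemma sc_sc (l m : Rb) (A : Mat2) : sc l (sc m A) = sc (l + m) A := by
  funext i j; exact (add_assoc l m (A i j)).symm

lemma sc_zero (A : Mat2) : sc ((0:ℝ) : Rb) A = A := by
  funext i j; show ((0:ℝ):Rb) + A i j = A i j; simp

lemma tMul_assoc (A B C : Mat2) : tMul (tMul A B) C = tMul A (tMul B C) := by
  funext i j
  simp only [tMul_ent]
  rw [← max_add_add_right, ← max_add_add_right, ← max_add_add_left, ← max_add_add_left,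
    max_max_max_comm]
  simp [add_assoc]

lemma max_eq_imp {x y z : Rb} (h : max x y = z) : x ≤ z ∧ y ≤ z ∧ (x = z ∨ y = z) := by
  refine ⟨h ▸ le_max_left x y, h ▸ le_max_right x y, ?_⟩
  rcases max_choice x y with h' | h'
  · exact Or.inl (h' ▸ h)
  · exact Or.inr (h' ▸ h)

lemma rmax_eq {x y z : ℝ} (h : max x y = z) : x ≤ z ∧ y ≤ z ∧ (x = z ∨ y = z) := by
  refine ⟨h ▸ le_max_left x y, h ▸ le_max_right x y, ?_⟩
  rcases max_choice x y with h' | h'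
  · exact Or.inl (h' ▸ h)
  · exact Or.inr (h' ▸ h)

/-- iterated scalar: rep l n = (n+1) copies of l added -/
noncomputable def rep (l : Rb) : ℕ → Rb
  | 0 => l
  | n + 1 => l + rep l n

lemma rep_bot (n : ℕ) : rep ⊥ n = ⊥ := by
  induction n with
  | zero => rfl
  | succ n ih => simp [rep, ih]

lemma rep_coe (x : ℝ) (n : ℕ) : rep (x : Rb) n = (((n + 1 : ℕ) * x : ℝ) : Rb) := by
  induction n with
  | zero => simp [rep]
  | succ n ih =>
    rw [rep, ih, ← WithBot.coe_add, WithBot.coe_eq_coe]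
    push_cast; ring

lemma tpow_sc (E : Mat2) (hEE : tMul E E = E) (l : Rb) (n : ℕ) :
    tpow (sc l E) n = sc (rep l n) E := by
  induction n with
  | zero => rfl
  | succ n ih =>
    rw [tpow, ih, sc_tMul, tMul_sc, hEE, sc_sc, rep]

lemma L1 (G : Set Mat2) (E : Mat2) (hG : IsGroupWith G E)
    (h : ∀ A ∈ G, ∃ l : Rb, A = sc l E) :
    IsAbelianOn G ∧ IsTorsionFreeOn G E := by
  have hEE : tMul E E = E := (hG.2.2.1 E hG.1).1
  constructor
  · intro A hA B hB
    obtain ⟨l, rfl⟩ := h A hA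
    obtain ⟨m, rfl⟩ := h B hB
    rw [sc_tMul, tMul_sc, sc_tMul, tMul_sc, sc_sc, sc_sc, add_comm]
  · intro A hA n hn
    obtain ⟨l, rfl⟩ := h A hA
    rw [tpow_sc E hEE] at hn
    induction l using WithBot.recBotCoe with
    | bot => rw [rep_bot] at hn; exact hn
    | coe x =>
      rw [rep_coe] at hn
      by_cases hEb : ∀ i j, E i j = ⊥
      · funext i j
        show (x : Rb) + E i j = E i j
        rw [hEb i j]; simp
      · push_neg at hEb
        obtain ⟨i, j, hij⟩ := hEb
        obtain ⟨e, he⟩ := WithBot.ne_bot_iff_exists.mp hij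
        have h2 : sc (((n + 1 : ℕ) * x : ℝ) : Rb) E i j = E i j := by rw [hn]
        rw [← he] at h2
        have h3 : ((n + 1 : ℕ) * x : ℝ) + e = e := by
          have := h2
          rw [show sc (((n + 1 : ℕ) * x : ℝ) : Rb) E i j
              = (((n + 1 : ℕ) * x : ℝ) : Rb) + E i j from rfl, ← he, ← WithBot.coe_add,
            WithBot.coe_eq_coe] at this
          exact this
        have hx : x = 0 := by
          have hn1 : ((n:ℝ) + 1) ≠ 0 := by positivity
          have : ((n:ℝ) + 1) * x = 0 := by push_cast at h3; linarith
          rcases mul_eq_zero.mp this with h' | h'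
          · exact absurd h' hn1
          · exact h'
        rw [hx, sc_zero]

lemma L2 (G : Set Mat2) (E : Mat2) (hG : IsGroupWith G E) (D : Mat2 → Prop) (hDE : D E)
    (r1 : ∀ A ∈ G, ∀ B ∈ G, D A → D B → D (tMul A B))
    (r2 : ∀ A ∈ G, ∀ B ∈ G, ¬D A → ¬D B → D (tMul A B))
    (r3 : ∀ A ∈ G, ∀ B ∈ G, D A → ¬D B → ¬D (tMul A B))
    (r4 : ∀ A ∈ G, ∀ B ∈ G, ¬D A → D B → ¬D (tMul A B))
    (hab : ∀ A ∈ G, ∀ B ∈ G, D A → D B → tMul A B = tMul B A)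
    (htf : ∀ A ∈ G, D A → ∀ n : ℕ, tpow A n = E → A = E) :
    (IsAbelianOn G ∧ IsTorsionFreeOn G E) ∨
      (∃ H : Set Mat2, H ⊆ G ∧ IsGroupWith H E ∧ IsAbelianOn H ∧ IsTorsionFreeOn H E ∧
        ∃ g ∈ G, g ∉ H ∧ ∀ x ∈ G, x ∈ H ∨ ∃ h ∈ H, x = tMul g h) := by
  by_cases hall : ∀ A ∈ G, D A
  · left
    exact ⟨fun A hA B hB => hab A hA B hB (hall A hA) (hall B hB),
      fun A hA n hn => htf A hA (hall A hA) n hn⟩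
  · right
    push_neg at hall
    obtain ⟨g, hgG, hgD⟩ := hall
    refine ⟨{A | A ∈ G ∧ D A}, fun A hA => hA.1, ?_, ?_, ?_, g, hgG, ?_, ?_⟩
    · refine ⟨⟨hG.1, hDE⟩, ?_, ?_, ?_⟩
      · intro A hA B hB
        exact ⟨hG.2.1 A hA.1 B hB.1, r1 A hA.1 B hB.1 hA.2 hB.2⟩
      · intro A hA; exact hG.2.2.1 A hA.1
      · intro A hA
        obtain ⟨B, hBG, hAB, hBA⟩ := hG.2.2.2 A hA.1
        have hDB : D B := by
          by_contra hB
          exact (r3 A hA.1 B hBG hA.2 hB) (hAB ▸ hDE)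
        exact ⟨B, ⟨hBG, hDB⟩, hAB, hBA⟩
    · intro A hA B hB; exact hab A hA.1 B hB.1 hA.2 hB.2
    · intro A hA n hn; exact htf A hA.1 hA.2 n hn
    · exact fun h => hgD h.2
    · intro x hx
      by_cases hDx : D x
      · exact Or.inl ⟨hx, hDx⟩
      · obtain ⟨g', hg'G, hgg', hg'g⟩ := hG.2.2.2 g hgG
        have hDg' : ¬D g' := by
          intro h
          exact (r4 g hgG g' hg'G hgD h) (hgg' ▸ hDE)
        refine Or.inr ⟨tMul g' x, ⟨hG.2.1 g' hg'G x hx, r2 g' hg'G x hx hDg' hDx⟩, ?_⟩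
        rw [← tMul_assoc, hgg', (hG.2.2.1 x hx).1]

lemma eq4 {a b c d a' b' c' d' : Rb} (h1 : a = a') (h2 : b = b') (h3 : c = c')
    (h4 : d = d') : max (max a b) (max c d) = max (max a' b') (max c' d') := by
  rw [h1, h2, h3, h4]

lemma caseC1 (G : Set Mat2) (E : Mat2) (u v : Fin 2 → Rb) (hG : IsGroupWith G E)
    (hE : ∀ i j, E i j = u i + v j) :
    ∀ A ∈ G, ∃ l : Rb, A = sc l E := by
  have h1 : ∀ (c a b : Rb), c + max a b = max (c + a) (c + b) :=
    fun c a b => (max_add_add_left c a b).symm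
  have h2 : ∀ (a b c : Rb), max a b + c = max (a + c) (b + c) :=
    fun a b c => (max_add_add_right a b c).symm
  intro A hA
  obtain ⟨hEA, hAE⟩ := hG.2.2.1 A hA
  have key : tMul E (tMul A E) = A := by rw [hAE, hEA]
  refine ⟨max (max (v 0 + A 0 0 + u 0) (v 0 + A 0 1 + u 1))
      (max (v 1 + A 1 0 + u 0) (v 1 + A 1 1 + u 1)), ?_⟩
  funext i j
  conv_lhs => rw [← key]
  simp only [tMul_ent, sc, hE]
  simp only [h1, h2]
  refine eq4 ?_ ?_ ?_ ?_ <;> abel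
lemma addself {x : Rb} (h : x + x = x) : x = ⊥ ∨ x = 0 := by
  induction x using WithBot.recBotCoe with
  | bot => exact Or.inl rfl
  | coe r =>
    right
    rw [← WithBot.coe_add, WithBot.coe_eq_coe] at h
    have : r = 0 := by linarith
    simp [this]

lemma coe_max_eq {x y z : ℝ} (h : max (↑x : Rb) (↑y) = ↑z) : max x y = z := by
  rw [← WithBot.coe_max, WithBot.coe_eq_coe] at h; exact h

lemma ent_cases (P : Fin 2 → Fin 2 → Prop) (h00 : P 0 0) (h01 : P 0 1) (h10 : P 1 0)
    (h11 : P 1 1) : ∀ i j, P i j := by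
  intro i j; fin_cases i <;> fin_cases j <;> assumption

lemma wbcases (x : Rb) : x = ⊥ ∨ ∃ r : ℝ, x = ↑r := by
  induction x using WithBot.recBotCoe with
  | bot => exact Or.inl rfl
  | coe r => exact Or.inr ⟨r, rfl⟩

lemma classify (E : Mat2) (h : tMul E E = E) :
    (∃ u v : Fin 2 → Rb, ∀ i j, E i j = u i + v j) ∨
    (∃ b c : ℝ, b + c < 0 ∧ E 0 0 = 0 ∧ E 0 1 = ↑b ∧ E 1 0 = ↑c ∧ E 1 1 = 0) ∨
    (∃ b : ℝ, E 0 0 = 0 ∧ E 0 1 = ↑b ∧ E 1 0 = ⊥ ∧ E 1 1 = 0) ∨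
    (∃ c : ℝ, E 0 0 = 0 ∧ E 0 1 = ⊥ ∧ E 1 0 = ↑c ∧ E 1 1 = 0) ∨
    (E 0 0 = 0 ∧ E 0 1 = ⊥ ∧ E 1 0 = ⊥ ∧ E 1 1 = 0) := by
  have q1 : max (E 0 0 + E 0 0) (E 0 1 + E 1 0) = E 0 0 := by
    have := congrFun (congrFun h 0) 0; rwa [tMul_ent] at this
  have q2 : max (E 0 0 + E 0 1) (E 0 1 + E 1 1) = E 0 1 := by
    have := congrFun (congrFun h 0) 1; rwa [tMul_ent] at this
  have q3 : max (E 1 0 + E 0 0) (E 1 1 + E 1 0) = E 1 0 := by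
    have := congrFun (congrFun h 1) 0; rwa [tMul_ent] at this
  have q4 : max (E 1 0 + E 0 1) (E 1 1 + E 1 1) = E 1 1 := by
    have := congrFun (congrFun h 1) 1; rwa [tMul_ent] at this
  rcases wbcases (E 0 0) with ha | ⟨aR, ha⟩
  · -- a = ⊥
    rw [ha] at q1
    have hbc : E 0 1 + E 1 0 = ⊥ := le_bot_iff.mp ((max_eq_imp q1).2.1)
    rcases WithBot.add_eq_bot.mp hbc with hb | hc
    · -- b = ⊥
      rw [hb, WithBot.add_bot, max_eq_right bot_le] at q4
      rcases addself q4 with hd | hd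
      · rw [ha, hd, WithBot.add_bot, WithBot.bot_add, max_self] at q3
        refine Or.inl ⟨fun _ => ⊥, fun _ => ⊥, ent_cases _ ?_ ?_ ?_ ?_⟩ <;>
          simp [ha, hb, ← q3, hd]
      · refine Or.inl ⟨![⊥, 0], ![E 1 0, 0], ent_cases _ ?_ ?_ ?_ ?_⟩ <;>
          simp [ha, hb, hd]
    · -- c = ⊥
      rw [hc, WithBot.bot_add, max_eq_right bot_le] at q4
      rcases addself q4 with hd | hd
      · rw [ha, hd, WithBot.bot_add, WithBot.add_bot, max_self] at q2
        refine Or.inl ⟨fun _ => ⊥, fun _ => ⊥, ent_cases _ ?_ ?_ ?_ ?_⟩ <;>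
          simp [ha, ← q2, hc, hd]
      · refine Or.inl ⟨![E 0 1, 0], ![⊥, 0], ent_cases _ ?_ ?_ ?_ ?_⟩ <;>
          simp [ha, hc, hd]
  · -- a = ↑aR
    rcases wbcases (E 1 1) with hd | ⟨dR, hd⟩
    · -- d = ⊥
      rw [hd] at q4
      have h10 : E 1 0 + E 0 1 = ⊥ := le_bot_iff.mp (max_eq_imp q4).1
      rcases WithBot.add_eq_bot.mp h10 with hc | hb
      · -- c = ⊥
        rw [ha, hc, WithBot.add_bot, max_eq_left bot_le, ← WithBot.coe_add,
          WithBot.coe_eq_coe] at q1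
        have ha0 : aR = 0 := by linarith
        refine Or.inl ⟨![0, ⊥], ![0, E 0 1], ent_cases _ ?_ ?_ ?_ ?_⟩ <;>
          simp [ha, ha0, hc, hd]
      · -- b = ⊥
        rw [ha, hb, WithBot.bot_add, max_eq_left bot_le, ← WithBot.coe_add,
          WithBot.coe_eq_coe] at q1
        have ha0 : aR = 0 := by linarith
        refine Or.inl ⟨![0, E 1 0], ![0, ⊥], ent_cases _ ?_ ?_ ?_ ?_⟩ <;>
          simp [ha, ha0, hb, hd]
    · -- d = ↑dR
      rcases wbcases (E 0 1) with hb | ⟨bR, hb⟩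
      · rcases wbcases (E 1 0) with hc | ⟨cR, hc⟩
        · -- C2d
          rw [ha, hb, WithBot.bot_add, max_eq_left bot_le, ← WithBot.coe_add,
            WithBot.coe_eq_coe] at q1
          rw [hb, hc, hd, WithBot.bot_add, max_eq_right bot_le, ← WithBot.coe_add,
            WithBot.coe_eq_coe] at q4
          have ha0 : aR = 0 := by linarith
          have hd0 : dR = 0 := by linarith
          exact Or.inr (Or.inr (Or.inr (Or.inr ⟨by simp [ha, ha0], hb, hc, by simp [hd, hd0]⟩)))
        · -- b = ⊥, c real : C2c
          rw [ha, hb, WithBot.bot_add, max_eq_left bot_le, ← WithBot.coe_add,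
            WithBot.coe_eq_coe] at q1
          rw [hb, hc, hd, WithBot.add_bot, max_eq_right bot_le, ← WithBot.coe_add,
            WithBot.coe_eq_coe] at q4
          have ha0 : aR = 0 := by linarith
          have hd0 : dR = 0 := by linarith
          exact Or.inr (Or.inr (Or.inr (Or.inl ⟨cR, by simp [ha, ha0], hb, hc,
            by simp [hd, hd0]⟩)))
      · rcases wbcases (E 1 0) with hc | ⟨cR, hc⟩
        · -- b real, c = ⊥ : C2b
          rw [ha, hb, hc, WithBot.add_bot, max_eq_left bot_le, ← WithBot.coe_add,
            WithBot.coe_eq_coe] at q1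
          rw [hc, hd, WithBot.bot_add, max_eq_right bot_le, ← WithBot.coe_add,
            WithBot.coe_eq_coe] at q4
          have ha0 : aR = 0 := by linarith
          have hd0 : dR = 0 := by linarith
          exact Or.inr (Or.inr (Or.inl ⟨bR, by simp [ha, ha0], hb, hc, by simp [hd, hd0]⟩))
        · -- all entries real
          rw [ha, hb, hc, ← WithBot.coe_add, ← WithBot.coe_add] at q1
          rw [ha, hb, hd, ← WithBot.coe_add, ← WithBot.coe_add] at q2
          rw [hb, hc, hd, ← WithBot.coe_add, ← WithBot.coe_add] at q4
          obtain ⟨h1a, h1b, h1c⟩ := rmax_eq (coe_max_eq q1)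
          obtain ⟨h2a, h2b, h2c⟩ := rmax_eq (coe_max_eq q2)
          obtain ⟨h4a, h4b, h4c⟩ := rmax_eq (coe_max_eq q4)
          have had : aR = 0 ∨ dR = 0 := by
            rcases h2c with h' | h'
            · left; linarith
            · right; linarith
          by_cases ha0 : aR = 0 <;> by_cases hd0 : dR = 0
          · by_cases hlt : bR + cR < 0
            · exact Or.inr (Or.inl ⟨bR, cR, hlt, by simp [ha, ha0], hb, hc, by simp [hd, hd0]⟩)
            · have hbc0 : cR + bR = 0 := by
                have : bR + cR ≤ 0 := by rw [← ha0]; exact h1b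
                have := not_lt.mp hlt; linarith
              refine Or.inl ⟨![0, ↑cR], ![0, ↑bR], ent_cases _ ?_ ?_ ?_ ?_⟩ <;>
                simp [ha, ha0, hb, hc, hd, hd0, ← WithBot.coe_add, hbc0]
          · have hcb : cR + bR = dR := by
              rcases h4c with h' | h'
              · linarith
              · exfalso; exact hd0 (by linarith)
            refine Or.inl ⟨![0, ↑cR], ![0, ↑bR], ent_cases _ ?_ ?_ ?_ ?_⟩ <;>
              simp [ha, ha0, hb, hc, hd, ← WithBot.coe_add, hcb]
          · have hbc : bR + cR = aR := by
              rcases h1c with h' | h'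
              · exfalso; exact ha0 (by linarith)
              · linarith
            refine Or.inl ⟨![↑bR, 0], ![↑cR, 0], ent_cases _ ?_ ?_ ?_ ?_⟩ <;>
              simp [ha, hb, hc, hd, hd0, ← WithBot.coe_add, hbc]
          · exfalso; rcases had with h' | h' <;> [exact ha0 h'; exact hd0 h']
lemma ent {X Y Z : Mat2} (h : tMul X Y = Z) (i j : Fin 2) :
    max (X i 0 + Y 0 j) (X i 1 + Y 1 j) = Z i j := by
  rw [← h, tMul_ent]

lemma add_eq_coe' {x y : Rb} {r : ℝ} (h : x + y = ↑r) :
    ∃ xr yr : ℝ, x = ↑xr ∧ y = ↑yr ∧ xr + yr = r := by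
  induction x using WithBot.recBotCoe with
  | bot => simp at h
  | coe xr =>
    induction y using WithBot.recBotCoe with
    | bot => simp at h
    | coe yr =>
      rw [← WithBot.coe_add, WithBot.coe_eq_coe] at h
      exact ⟨xr, yr, rfl, rfl, h⟩

lemma coe_le_imp_ex {r : ℝ} {q : Rb} (h : (↑r : Rb) ≤ q) : ∃ qr : ℝ, q = ↑qr ∧ r ≤ qr := by
  induction q using WithBot.recBotCoe with
  | bot => exact absurd h (by simp)
  | coe qr => exact ⟨qr, rfl, WithBot.coe_le_coe.mp h⟩

lemma zero_rb : (0 : Rb) = ((0 : ℝ) : Rb) := rfl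

lemma caseC2b (G : Set Mat2) (E : Mat2) (b : ℝ) (hG : IsGroupWith G E)
    (e00 : E 0 0 = 0) (e01 : E 0 1 = ↑b) (e10 : E 1 0 = ⊥) (e11 : E 1 1 = 0) :
    ∀ A ∈ G, ∃ l : Rb, A = sc l E := by
  intro A hA
  obtain ⟨hEA, hAE⟩ := hG.2.2.1 A hA
  obtain ⟨B, hB, hAB, hBA⟩ := hG.2.2.2 A hA
  obtain ⟨hEB, hBE⟩ := hG.2.2.1 B hB
  have iA2 : (↑b : Rb) + A 1 1 ≤ A 0 1 := by
    have := ent hEA 0 1; rw [e00, e01, zero_add] at this; exact (max_eq_imp this).2.1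
  have iA3 : A 0 0 + (↑b : Rb) ≤ A 0 1 := by
    have := ent hAE 0 1; rw [e01, e11, add_zero] at this; exact (max_eq_imp this).1
  have iA4 : A 1 0 + (↑b : Rb) ≤ A 1 1 := by
    have := ent hAE 1 1; rw [e01, e11, add_zero] at this; exact (max_eq_imp this).1
  have iB2 : (↑b : Rb) + B 1 1 ≤ B 0 1 := by
    have := ent hEB 0 1; rw [e00, e01, zero_add] at this; exact (max_eq_imp this).2.1
  have iB3 : B 0 0 + (↑b : Rb) ≤ B 0 1 := by
    have := ent hBE 0 1; rw [e01, e11, add_zero] at this; exact (max_eq_imp this).1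
  have iB4 : B 1 0 + (↑b : Rb) ≤ B 1 1 := by
    have := ent hBE 1 1; rw [e01, e11, add_zero] at this; exact (max_eq_imp this).1
  obtain ⟨sR, hs⟩ : ∃ sR : ℝ, A 1 1 = ↑sR := by
    rcases wbcases (A 1 1) with hs | ⟨sR, hs⟩
    · exfalso
      rw [hs, le_bot_iff] at iA4
      rcases WithBot.add_eq_bot.mp iA4 with h' | h'
      · have h3 := ent hAB 1 1
        rw [e11, h', hs, WithBot.bot_add, WithBot.bot_add, max_self] at h3
        exact absurd (h3.trans WithBot.coe_zero.symm) WithBot.bot_ne_coe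
      · exact absurd h' (by simp)
    · exact ⟨sR, hs⟩
  obtain ⟨sR', hs'⟩ : ∃ sR' : ℝ, B 1 1 = ↑sR' := by
    rcases wbcases (B 1 1) with hs' | ⟨sR', hs'⟩
    · exfalso
      rw [hs', le_bot_iff] at iB4
      rcases WithBot.add_eq_bot.mp iB4 with h' | h'
      · have h3 := ent hBA 1 1
        rw [e11, h', hs', WithBot.bot_add, WithBot.bot_add, max_self] at h3
        exact absurd (h3.trans WithBot.coe_zero.symm) WithBot.bot_ne_coe
      · exact absurd h' (by simp)
    · exact ⟨sR', hs'⟩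
  have hr : A 1 0 = ⊥ := by
    have h3 := ent hBA 1 0; rw [e10] at h3
    have h2 := le_bot_iff.mp (max_eq_imp h3).2.1
    rcases WithBot.add_eq_bot.mp h2 with h' | h'
    · rw [hs'] at h'; exact absurd h' (by simp)
    · exact h'
  have hr' : B 1 0 = ⊥ := by
    have h3 := ent hAB 1 0; rw [e10] at h3
    have h2 := le_bot_iff.mp (max_eq_imp h3).2.1
    rcases WithBot.add_eq_bot.mp h2 with h' | h'
    · rw [hs] at h'; exact absurd h' (by simp)
    · exact h'
  have p00 : A 0 0 + B 0 0 = ((0:ℝ) : Rb) := by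
    have h3 := ent hAB 0 0; rw [e00, hr', WithBot.add_bot, max_eq_left bot_le] at h3
    rw [h3]; rfl
  obtain ⟨pR, pR', hp, hp', hpp⟩ := add_eq_coe' p00
  have hss : sR + sR' = 0 := by
    have h3 := ent hAB 1 1; rw [e11, hr, WithBot.bot_add, max_eq_right bot_le] at h3
    rw [hs, hs', ← WithBot.coe_add] at h3
    exact_mod_cast h3
  obtain ⟨qR, hq, hq1⟩ : ∃ qR : ℝ, A 0 1 = ↑qR ∧ pR + b ≤ qR := by
    rw [hp, ← WithBot.coe_add] at iA3; exact coe_le_imp_ex iA3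
  obtain ⟨qR', hq', hq1'⟩ : ∃ qR' : ℝ, B 0 1 = ↑qR' ∧ pR' + b ≤ qR' := by
    rw [hp', ← WithBot.coe_add] at iB3; exact coe_le_imp_ex iB3
  have pab : pR + qR' ≤ b ∧ qR + sR' ≤ b := by
    have h3 := ent hAB 0 1
    rw [e01, hp, hq', hq, hs', ← WithBot.coe_add, ← WithBot.coe_add] at h3
    obtain ⟨h1, h2, -⟩ := rmax_eq (coe_max_eq h3)
    exact ⟨h1, h2⟩
  have pba : pR' + qR ≤ b ∧ qR' + sR ≤ b := by
    have h3 := ent hBA 0 1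
    rw [e01, hp', hq, hq', hs, ← WithBot.coe_add, ← WithBot.coe_add] at h3
    obtain ⟨h1, h2, -⟩ := rmax_eq (coe_max_eq h3)
    exact ⟨h1, h2⟩
  have iA2' : b + sR ≤ qR := by
    rw [hs, hq, ← WithBot.coe_add] at iA2; exact WithBot.coe_le_coe.mp iA2
  have iB2' : b + sR' ≤ qR' := by
    rw [hs', hq', ← WithBot.coe_add] at iB2; exact WithBot.coe_le_coe.mp iB2
  have hqv : qR = pR + b := by linarith [pba.1, hq1, hpp]
  have hps : pR = sR := by linarith [pab.1, iB2', iA2', hss, hpp]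
  refine ⟨↑pR, ?_⟩
  funext i j
  have key : ∀ i j, A i j = sc (↑pR) E i j := by
    refine ent_cases _ ?_ ?_ ?_ ?_ <;> simp only [sc, e00, e01, e10, e11]
    · rw [hp, add_zero]
    · rw [hq, ← WithBot.coe_add, WithBot.coe_eq_coe, hqv, add_comm]
    · rw [hr, WithBot.add_bot]
    · rw [hs, add_zero, WithBot.coe_eq_coe, hps]
  exact key i j

lemma caseC2c (G : Set Mat2) (E : Mat2) (c : ℝ) (hG : IsGroupWith G E)
    (e00 : E 0 0 = 0) (e01 : E 0 1 = ⊥) (e10 : E 1 0 = ↑c) (e11 : E 1 1 = 0) :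
    ∀ A ∈ G, ∃ l : Rb, A = sc l E := by
  intro A hA
  obtain ⟨hEA, hAE⟩ := hG.2.2.1 A hA
  obtain ⟨B, hB, hAB, hBA⟩ := hG.2.2.2 A hA
  obtain ⟨hEB, hBE⟩ := hG.2.2.1 B hB
  have iA2 : (↑c : Rb) + A 0 0 ≤ A 1 0 := by
    have := ent hEA 1 0; rw [e10, e11, zero_add] at this; exact (max_eq_imp this).1
  have iA3 : A 1 1 + (↑c : Rb) ≤ A 1 0 := by
    have := ent hAE 1 0; rw [e00, e10, add_zero] at this; exact (max_eq_imp this).2.1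
  have iA4 : A 0 1 + (↑c : Rb) ≤ A 0 0 := by
    have := ent hAE 0 0; rw [e00, e10, add_zero] at this; exact (max_eq_imp this).2.1
  have iB2 : (↑c : Rb) + B 0 0 ≤ B 1 0 := by
    have := ent hEB 1 0; rw [e10, e11, zero_add] at this; exact (max_eq_imp this).1
  have iB3 : B 1 1 + (↑c : Rb) ≤ B 1 0 := by
    have := ent hBE 1 0; rw [e00, e10, add_zero] at this; exact (max_eq_imp this).2.1
  have iB4 : B 0 1 + (↑c : Rb) ≤ B 0 0 := by
    have := ent hBE 0 0; rw [e00, e10, add_zero] at this; exact (max_eq_imp this).2.1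
  obtain ⟨sR, hs⟩ : ∃ sR : ℝ, A 0 0 = ↑sR := by
    rcases wbcases (A 0 0) with hs | ⟨sR, hs⟩
    · exfalso
      rw [hs, le_bot_iff] at iA4
      rcases WithBot.add_eq_bot.mp iA4 with h' | h'
      · have h3 := ent hAB 0 0
        rw [e00, h', hs, WithBot.bot_add, WithBot.bot_add, max_self] at h3
        exact absurd (h3.trans WithBot.coe_zero.symm) WithBot.bot_ne_coe
      · exact absurd h' (by simp)
    · exact ⟨sR, hs⟩
  obtain ⟨sR', hs'⟩ : ∃ sR' : ℝ, B 0 0 = ↑sR' := by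
    rcases wbcases (B 0 0) with hs' | ⟨sR', hs'⟩
    · exfalso
      rw [hs', le_bot_iff] at iB4
      rcases WithBot.add_eq_bot.mp iB4 with h' | h'
      · have h3 := ent hBA 0 0
        rw [e00, h', hs', WithBot.bot_add, WithBot.bot_add, max_self] at h3
        exact absurd (h3.trans WithBot.coe_zero.symm) WithBot.bot_ne_coe
      · exact absurd h' (by simp)
    · exact ⟨sR', hs'⟩
  have hr : A 0 1 = ⊥ := by
    have h3 := ent hBA 0 1; rw [e01] at h3
    have h2 := le_bot_iff.mp (max_eq_imp h3).1
    rcases WithBot.add_eq_bot.mp h2 with h' | h'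
    · rw [hs'] at h'; exact absurd h' (by simp)
    · exact h'
  have hr' : B 0 1 = ⊥ := by
    have h3 := ent hAB 0 1; rw [e01] at h3
    have h2 := le_bot_iff.mp (max_eq_imp h3).1
    rcases WithBot.add_eq_bot.mp h2 with h' | h'
    · rw [hs] at h'; exact absurd h' (by simp)
    · exact h'
  have p00 : A 1 1 + B 1 1 = ((0:ℝ) : Rb) := by
    have h3 := ent hAB 1 1; rw [e11, hr', WithBot.add_bot, max_eq_right bot_le] at h3
    rw [h3]; rfl
  obtain ⟨pR, pR', hp, hp', hpp⟩ := add_eq_coe' p00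
  have hss : sR + sR' = 0 := by
    have h3 := ent hAB 0 0; rw [e00, hr, WithBot.bot_add, max_eq_left bot_le] at h3
    rw [hs, hs', ← WithBot.coe_add] at h3
    exact_mod_cast h3
  obtain ⟨qR, hq, hq1⟩ : ∃ qR : ℝ, A 1 0 = ↑qR ∧ pR + c ≤ qR := by
    rw [hp, ← WithBot.coe_add] at iA3; exact coe_le_imp_ex iA3
  obtain ⟨qR', hq', hq1'⟩ : ∃ qR' : ℝ, B 1 0 = ↑qR' ∧ pR' + c ≤ qR' := by
    rw [hp', ← WithBot.coe_add] at iB3; exact coe_le_imp_ex iB3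
  have pab : qR + sR' ≤ c ∧ pR + qR' ≤ c := by
    have h3 := ent hAB 1 0
    rw [e10, hq, hs', hp, hq', ← WithBot.coe_add, ← WithBot.coe_add] at h3
    obtain ⟨h1, h2, -⟩ := rmax_eq (coe_max_eq h3)
    exact ⟨h1, h2⟩
  have pba : qR' + sR ≤ c ∧ pR' + qR ≤ c := by
    have h3 := ent hBA 1 0
    rw [e10, hq', hs, hp', hq, ← WithBot.coe_add, ← WithBot.coe_add] at h3
    obtain ⟨h1, h2, -⟩ := rmax_eq (coe_max_eq h3)
    exact ⟨h1, h2⟩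
  have iA2' : c + sR ≤ qR := by
    rw [hs, hq, ← WithBot.coe_add] at iA2; exact WithBot.coe_le_coe.mp iA2
  have iB2' : c + sR' ≤ qR' := by
    rw [hs', hq', ← WithBot.coe_add] at iB2; exact WithBot.coe_le_coe.mp iB2
  have hqv : qR = pR + c := by linarith [pba.2, hq1, hpp]
  have hps : pR = sR := by linarith [pab.2, iB2', iA2', hss, hpp]
  refine ⟨↑pR, ?_⟩
  funext i j
  have key : ∀ i j, A i j = sc (↑pR) E i j := by
    refine ent_cases _ ?_ ?_ ?_ ?_ <;> simp only [sc, e00, e01, e10, e11]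
    · rw [hs, add_zero, WithBot.coe_eq_coe, hps]
    · rw [hr, WithBot.add_bot]
    · rw [hq, ← WithBot.coe_add, WithBot.coe_eq_coe, hqv, add_comm]
    · rw [hp, add_zero]
  exact key i j
noncomputable def dg (p s : Rb) : Mat2 := ![![p, ⊥], ![⊥, s]]
noncomputable def adg (q r : Rb) : Mat2 := ![![⊥, q], ![r, ⊥]]

lemma max_bot_r (x : Rb) : max x ⊥ = x := max_eq_left bot_le
lemma max_bot_l (x : Rb) : max ⊥ x = x := max_eq_right bot_le

lemma dd (p s p' s' : ℝ) : tMul (dg ↑p ↑s) (dg ↑p' ↑s') = dg ↑(p + p') ↑(s + s') := by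
  funext i j
  fin_cases i <;> fin_cases j <;>
    simp [tMul_ent, dg, max_bot_r, max_bot_l, ← WithBot.coe_add]

lemma da (p s q' r' : ℝ) : tMul (dg ↑p ↑s) (adg ↑q' ↑r') = adg ↑(p + q') ↑(s + r') := by
  funext i j
  fin_cases i <;> fin_cases j <;>
    simp [tMul_ent, dg, adg, max_bot_r, max_bot_l, ← WithBot.coe_add]

lemma ad (q r p' s' : ℝ) : tMul (adg ↑q ↑r) (dg ↑p' ↑s') = adg ↑(q + s') ↑(r + p') := by
  funext i j
  fin_cases i <;> fin_cases j <;>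
    simp [tMul_ent, dg, adg, max_bot_r, max_bot_l, ← WithBot.coe_add]

lemma aa (q r q' r' : ℝ) : tMul (adg ↑q ↑r) (adg ↑q' ↑r') = dg ↑(q + r') ↑(r + q') := by
  funext i j
  fin_cases i <;> fin_cases j <;>
    simp [tMul_ent, dg, adg, max_bot_r, max_bot_l, ← WithBot.coe_add]

lemma not_dg_adg (q r : ℝ) : ¬ ∃ p s : ℝ, adg ↑q ↑r = dg ↑p ↑s := by
  rintro ⟨p, s, h⟩
  have := congrFun (congrFun h 0) 0
  simp [adg, dg] at this

lemma cls2d (G : Set Mat2) (E : Mat2) (hG : IsGroupWith G E)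
    (e00 : E 0 0 = 0) (e01 : E 0 1 = ⊥) (e10 : E 1 0 = ⊥) (e11 : E 1 1 = 0) :
    ∀ A ∈ G, (∃ p s : ℝ, A = dg ↑p ↑s) ∨ (∃ q r : ℝ, A = adg ↑q ↑r) := by
  intro A hA
  obtain ⟨B, hB, hAB, hBA⟩ := hG.2.2.2 A hA
  have ab01 := ent hAB 0 1
  have ab10 := ent hAB 1 0
  have ba01 := ent hBA 0 1
  have ba10 := ent hBA 1 0
  rw [e01] at ab01 ba01
  rw [e10] at ab10 ba10
  have ab01a := WithBot.add_eq_bot.mp (le_bot_iff.mp (max_eq_imp ab01).1)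
  have ab01b := WithBot.add_eq_bot.mp (le_bot_iff.mp (max_eq_imp ab01).2.1)
  have ab10a := WithBot.add_eq_bot.mp (le_bot_iff.mp (max_eq_imp ab10).1)
  have ab10b := WithBot.add_eq_bot.mp (le_bot_iff.mp (max_eq_imp ab10).2.1)
  have ba01a := WithBot.add_eq_bot.mp (le_bot_iff.mp (max_eq_imp ba01).1)
  have ba01b := WithBot.add_eq_bot.mp (le_bot_iff.mp (max_eq_imp ba01).2.1)
  have ba10a := WithBot.add_eq_bot.mp (le_bot_iff.mp (max_eq_imp ba10).1)
  have ba10b := WithBot.add_eq_bot.mp (le_bot_iff.mp (max_eq_imp ba10).2.1)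
  have ab00 := ent hAB 0 0
  have ab11 := ent hAB 1 1
  rw [e00] at ab00
  rw [e11] at ab11
  rcases (max_eq_imp ab00).2.2 with hcase | hcase
  · -- A 0 0 + B 0 0 = 0 : diagonal case
    left
    obtain ⟨p, p', hp, hp', -⟩ := add_eq_coe' (hcase.trans zero_rb)
    have hB01 : B 0 1 = ⊥ := by
      rcases ab01a with h' | h'
      · rw [hp] at h'; exact absurd h' (by simp)
      · exact h'
    have hA01 : A 0 1 = ⊥ := by
      rcases ba01a with h' | h'
      · rw [hp'] at h'; exact absurd h' (by simp)
      · exact h'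
    have hB10 : B 1 0 = ⊥ := by
      rcases ba10a with h' | h'
      · exact h'
      · rw [hp] at h'; exact absurd h' (by simp)
    have h11 : A 1 1 + B 1 1 = ((0:ℝ) : Rb) := by
      rw [hB01, WithBot.add_bot, max_bot_l] at ab11
      rw [ab11]; rfl
    obtain ⟨s, s', hs, hs', -⟩ := add_eq_coe' h11
    have hA10 : A 1 0 = ⊥ := by
      rcases ba10b with h' | h'
      · rw [hs'] at h'; exact absurd h' (by simp)
      · exact h'
    refine ⟨p, s, funext fun i => funext fun j => ?_⟩
    have key : ∀ i j, A i j = dg (↑p) (↑s) i j := by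
      refine ent_cases _ ?_ ?_ ?_ ?_ <;> simp [dg, hp, hA01, hA10, hs]
    exact key i j
  · -- A 0 1 + B 1 0 = 0 : antidiagonal case
    right
    obtain ⟨q, r', hq, hr', -⟩ := add_eq_coe' (hcase.trans zero_rb)
    have hB11 : B 1 1 = ⊥ := by
      rcases ab01b with h' | h'
      · rw [hq] at h'; exact absurd h' (by simp)
      · exact h'
    have hB00 : B 0 0 = ⊥ := by
      rcases ba01a with h' | h'
      · exact h'
      · rw [hq] at h'; exact absurd h' (by simp)
    have hA11 : A 1 1 = ⊥ := by
      rcases ab10b with h' | h'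
      · exact h'
      · rw [hr'] at h'; exact absurd h' (by simp)
    have h10 : A 1 0 + B 0 1 = ((0:ℝ) : Rb) := by
      rw [hA11, WithBot.bot_add, max_bot_r] at ab11
      rw [ab11]; rfl
    obtain ⟨r, q', hr, hq', -⟩ := add_eq_coe' h10
    have hA00 : A 0 0 = ⊥ := by
      rcases ba10a with h' | h'
      · rw [hr'] at h'; exact absurd h' (by simp)
      · exact h'
    refine ⟨q, r, funext fun i => funext fun j => ?_⟩
    have key : ∀ i j, A i j = adg (↑q) (↑r) i j := by
      refine ent_cases _ ?_ ?_ ?_ ?_ <;> simp [adg, hq, hA00, hA11, hr]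
    exact key i j
lemma caseC2d (G : Set Mat2) (E : Mat2) (hG : IsGroupWith G E)
    (e00 : E 0 0 = 0) (e01 : E 0 1 = ⊥) (e10 : E 1 0 = ⊥) (e11 : E 1 1 = 0) :
    (IsAbelianOn G ∧ IsTorsionFreeOn G E) ∨
      (∃ H : Set Mat2, H ⊆ G ∧ IsGroupWith H E ∧ IsAbelianOn H ∧ IsTorsionFreeOn H E ∧
        ∃ g ∈ G, g ∉ H ∧ ∀ x ∈ G, x ∈ H ∨ ∃ h ∈ H, x = tMul g h) := by
  have cls := cls2d G E hG e00 e01 e10 e11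
  have hEdg : E = dg ((0:ℝ):Rb) ((0:ℝ):Rb) := by
    funext i j
    have key : ∀ i j, E i j = dg ((0:ℝ):Rb) ((0:ℝ):Rb) i j := by
      refine ent_cases _ ?_ ?_ ?_ ?_ <;> simp [dg, e00, e01, e10, e11]
    exact key i j
  have powlem : ∀ (p s : ℝ) (m : ℕ),
      tpow (dg ↑p ↑s) m = dg ↑(((m:ℝ) + 1) * p) ↑(((m:ℝ) + 1) * s) := by
    intro p s m
    induction m with
    | zero =>
      rw [show ((0:ℕ):ℝ) + 1 = 1 by norm_num, one_mul, one_mul]; rfl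
    | succ m ih =>
      rw [tpow, ih, dd, show p + ((m:ℝ) + 1) * p = (((m+1:ℕ):ℝ) + 1) * p by push_cast; ring,
        show s + ((m:ℝ) + 1) * s = (((m+1:ℕ):ℝ) + 1) * s by push_cast; ring]
  refine L2 G E hG (fun A => ∃ p s : ℝ, A = dg ↑p ↑s) ⟨0, 0, hEdg⟩ ?_ ?_ ?_ ?_ ?_ ?_
  · rintro A hA B hB ⟨p, s, rfl⟩ ⟨p', s', rfl⟩
    rw [dd]; exact ⟨p + p', s + s', rfl⟩
  · intro A hA B hB hDA hDB
    rcases cls A hA with h | ⟨q, r, rfl⟩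
    · exact absurd h hDA
    rcases cls B hB with h | ⟨q', r', rfl⟩
    · exact absurd h hDB
    rw [aa]; exact ⟨q + r', r + q', rfl⟩
  · rintro A hA B hB ⟨p, s, rfl⟩ hDB
    rcases cls B hB with h | ⟨q', r', rfl⟩
    · exact absurd h hDB
    rw [da]; exact not_dg_adg _ _
  · rintro A hA B hB hDA ⟨p', s', rfl⟩
    rcases cls A hA with h | ⟨q, r, rfl⟩
    · exact absurd h hDA
    rw [ad]; exact not_dg_adg _ _
  · rintro A hA B hB ⟨p, s, rfl⟩ ⟨p', s', rfl⟩
    rw [dd, dd, add_comm p' p, add_comm s' s]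
  · rintro A hA ⟨p, s, rfl⟩ n hpow
    rw [powlem] at hpow
    have h0 := congrFun (congrFun hpow 0) 0
    have h1 := congrFun (congrFun hpow 1) 1
    rw [e00] at h0
    rw [e11] at h1
    simp only [dg, Matrix.cons_val_zero, Matrix.cons_val_one, Matrix.head_cons] at h0 h1
    have hp : p = 0 := by
      have := WithBot.coe_eq_coe.mp (h0.trans zero_rb)
      have hn : ((n:ℝ) + 1) ≠ 0 := by positivity
      rcases mul_eq_zero.mp this with h' | h'
      · exact absurd h' hn
      · exact h'
    have hs : s = 0 := by
      have := WithBot.coe_eq_coe.mp (h1.trans zero_rb)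
      have hn : ((n:ℝ) + 1) ≠ 0 := by positivity
      rcases mul_eq_zero.mp this with h' | h'
      · exact absurd h' hn
      · exact h'
    rw [hp, hs, hEdg]
noncomputable def EM (b c : ℝ) : Mat2 := ![![0, ↑b], ![↑c, 0]]
noncomputable def FM (b c : ℝ) : Mat2 := ![![0, ↑(-c)], ![↑(-b), 0]]

lemma rb0 : (0 : Rb) = ((0:ℝ) : Rb) := WithBot.coe_zero.symm

lemma hEEa (b c : ℝ) (hbc : b + c < 0) : tMul (EM b c) (EM b c) = EM b c := by
  funext i j
  fin_cases i <;> fin_cases j <;> simp [tMul_ent, EM] <;>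
    (try norm_cast) <;>
    first
      | linarith
      | (simp only [sup_eq_max, max_def]; split_ifs <;> linarith)

lemma hEFa (b c : ℝ) (hbc : b + c < 0) : tMul (EM b c) (FM b c) = FM b c := by
  funext i j
  fin_cases i <;> fin_cases j <;> simp [tMul_ent, EM, FM] <;>
    (try norm_cast) <;>
    first
      | linarith
      | (simp only [sup_eq_max, max_def]; split_ifs <;> linarith)

lemma hFEa (b c : ℝ) (hbc : b + c < 0) : tMul (FM b c) (EM b c) = FM b c := by
  funext i j
  fin_cases i <;> fin_cases j <;> simp [tMul_ent, EM, FM] <;>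
    (try norm_cast) <;>
    first
      | linarith
      | (simp only [sup_eq_max, max_def]; split_ifs <;> linarith)

lemma hFFa (b c : ℝ) (hbc : b + c < 0) :
    tMul (FM b c) (FM b c) = sc ↑(-(b+c)) (EM b c) := by
  funext i j
  fin_cases i <;> fin_cases j <;> simp [tMul_ent, EM, FM, sc] <;>
    (try norm_cast) <;>
    first
      | linarith
      | (simp only [max_def]; split_ifs <;> linarith)

lemma hEnF {b c : ℝ} (hbc : b + c < 0) (l m : ℝ) : sc ↑l (EM b c) ≠ sc ↑m (FM b c) := by
  intro h
  have h0 := congrFun (congrFun h 0) 0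
  have h1 := congrFun (congrFun h 0) 1
  simp [sc, EM, FM] at h0 h1
  norm_cast at h0 h1
  linarith
lemma cls2a (b c : ℝ) (hbc : b + c < 0) (G : Set Mat2) (hG : IsGroupWith G (EM b c)) :
    ∀ A ∈ G, (∃ l : ℝ, A = sc ↑l (EM b c)) ∨ (∃ l : ℝ, A = sc ↑l (FM b c)) := by
  have e00 : EM b c 0 0 = 0 := by simp [EM]
  have e01 : EM b c 0 1 = ↑b := by simp [EM]
  have e10 : EM b c 1 0 = ↑c := by simp [EM]
  have e11 : EM b c 1 1 = 0 := by simp [EM]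
  intro A hA
  obtain ⟨hEA, hAE⟩ := hG.2.2.1 A hA
  obtain ⟨B, hB, hAB, hBA⟩ := hG.2.2.2 A hA
  obtain ⟨hEB, hBE⟩ := hG.2.2.1 B hB
  -- identity inequalities for a matrix
  have ineqs : ∀ X : Mat2, tMul (EM b c) X = X → tMul X (EM b c) = X →
      ((↑b:Rb) + X 1 0 ≤ X 0 0) ∧ ((↑b:Rb) + X 1 1 ≤ X 0 1) ∧
      ((↑c:Rb) + X 0 0 ≤ X 1 0) ∧ ((↑c:Rb) + X 0 1 ≤ X 1 1) ∧
      (X 0 1 + (↑c:Rb) ≤ X 0 0) ∧ (X 0 0 + (↑b:Rb) ≤ X 0 1) ∧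
      (X 1 1 + (↑c:Rb) ≤ X 1 0) ∧ (X 1 0 + (↑b:Rb) ≤ X 1 1) := by
    intro X hEX hXE
    have t1 := ent hEX 0 0; rw [e00, e01, zero_add] at t1
    have t2 := ent hEX 0 1; rw [e00, e01, zero_add] at t2
    have t3 := ent hEX 1 0; rw [e10, e11, zero_add] at t3
    have t4 := ent hEX 1 1; rw [e10, e11, zero_add] at t4
    have t5 := ent hXE 0 0; rw [e00, e10, add_zero] at t5
    have t6 := ent hXE 0 1; rw [e01, e11, add_zero] at t6
    have t7 := ent hXE 1 0; rw [e00, e10, add_zero] at t7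
    have t8 := ent hXE 1 1; rw [e01, e11, add_zero] at t8
    exact ⟨(max_eq_imp t1).2.1, (max_eq_imp t2).2.1, (max_eq_imp t3).1, (max_eq_imp t4).1,
      (max_eq_imp t5).2.1, (max_eq_imp t6).1, (max_eq_imp t7).2.1, (max_eq_imp t8).1⟩
  obtain ⟨iA1, iA2, iA3, iA4, iA5, iA6, iA7, iA8⟩ := ineqs A hEA hAE
  obtain ⟨iB1, iB2, iB3, iB4, iB5, iB6, iB7, iB8⟩ := ineqs B hEB hBE
  -- finiteness
  have fin00 : ∀ X Y : Mat2, tMul X Y = EM b c →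
      ((↑b:Rb) + X 1 0 ≤ X 0 0) → (X 0 1 + (↑c:Rb) ≤ X 0 0) → ∃ x : ℝ, X 0 0 = ↑x := by
    intro X Y hXY h1 h2
    rcases wbcases (X 0 0) with h0 | hx
    · exfalso
      rw [h0, le_bot_iff] at h1 h2
      have h10 : X 1 0 = ⊥ := by
        rcases WithBot.add_eq_bot.mp h1 with h' | h'
        · exact absurd h' (by simp)
        · exact h'
      have h01 : X 0 1 = ⊥ := by
        rcases WithBot.add_eq_bot.mp h2 with h' | h'
        · exact h'
        · exact absurd h' (by simp)
      have h3 := ent hXY 0 0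
      rw [e00, h0, h01, WithBot.bot_add, WithBot.bot_add, max_self] at h3
      exact absurd (h3.trans WithBot.coe_zero.symm) WithBot.bot_ne_coe
    · exact hx
  have fin11 : ∀ X Y : Mat2, tMul X Y = EM b c →
      ((↑c:Rb) + X 0 1 ≤ X 1 1) → (X 1 0 + (↑b:Rb) ≤ X 1 1) → ∃ x : ℝ, X 1 1 = ↑x := by
    intro X Y hXY h1 h2
    rcases wbcases (X 1 1) with h0 | hx
    · exfalso
      rw [h0, le_bot_iff] at h1 h2
      have h01 : X 0 1 = ⊥ := by
        rcases WithBot.add_eq_bot.mp h1 with h' | h'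
        · exact absurd h' (by simp)
        · exact h'
      have h10 : X 1 0 = ⊥ := by
        rcases WithBot.add_eq_bot.mp h2 with h' | h'
        · exact h'
        · exact absurd h' (by simp)
      have h3 := ent hXY 1 1
      rw [e11, h0, h10, WithBot.bot_add, WithBot.bot_add, max_self] at h3
      exact absurd (h3.trans WithBot.coe_zero.symm) WithBot.bot_ne_coe
    · exact hx
  obtain ⟨pR, hp⟩ := fin00 A B hAB iA1 iA5
  obtain ⟨sR, hs⟩ := fin11 A B hAB iA4 iA8
  obtain ⟨pR', hp'⟩ := fin00 B A hBA iB1 iB5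
  obtain ⟨sR', hs'⟩ := fin11 B A hBA iB4 iB8
  obtain ⟨qR, hq, -⟩ : ∃ x : ℝ, A 0 1 = ↑x ∧ pR + b ≤ x := by
    rw [hp, ← WithBot.coe_add] at iA6; exact coe_le_imp_ex iA6
  obtain ⟨rR, hr, -⟩ : ∃ x : ℝ, A 1 0 = ↑x ∧ c + pR ≤ x := by
    rw [hp, ← WithBot.coe_add] at iA3; exact coe_le_imp_ex iA3
  obtain ⟨qR', hq', -⟩ : ∃ x : ℝ, B 0 1 = ↑x ∧ pR' + b ≤ x := by
    rw [hp', ← WithBot.coe_add] at iB6; exact coe_le_imp_ex iB6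
  obtain ⟨rR', hr', -⟩ : ∃ x : ℝ, B 1 0 = ↑x ∧ c + pR' ≤ x := by
    rw [hp', ← WithBot.coe_add] at iB3; exact coe_le_imp_ex iB3
  -- convert identity inequalities to ℝ
  rw [hp, hr, ← WithBot.coe_add, WithBot.coe_le_coe] at iA1
  rw [hq, hs, ← WithBot.coe_add, WithBot.coe_le_coe] at iA2
  rw [hp, hr, ← WithBot.coe_add, WithBot.coe_le_coe] at iA3
  rw [hq, hs, ← WithBot.coe_add, WithBot.coe_le_coe] at iA4
  rw [hp, hq, ← WithBot.coe_add, WithBot.coe_le_coe] at iA5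
  rw [hp, hq, ← WithBot.coe_add, WithBot.coe_le_coe] at iA6
  rw [hr, hs, ← WithBot.coe_add, WithBot.coe_le_coe] at iA7
  rw [hr, hs, ← WithBot.coe_add, WithBot.coe_le_coe] at iA8
  rw [hp', hr', ← WithBot.coe_add, WithBot.coe_le_coe] at iB1
  rw [hq', hs', ← WithBot.coe_add, WithBot.coe_le_coe] at iB2
  rw [hp', hr', ← WithBot.coe_add, WithBot.coe_le_coe] at iB3
  rw [hq', hs', ← WithBot.coe_add, WithBot.coe_le_coe] at iB4
  rw [hp', hq', ← WithBot.coe_add, WithBot.coe_le_coe] at iB5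
  rw [hp', hq', ← WithBot.coe_add, WithBot.coe_le_coe] at iB6
  rw [hr', hs', ← WithBot.coe_add, WithBot.coe_le_coe] at iB7
  rw [hr', hs', ← WithBot.coe_add, WithBot.coe_le_coe] at iB8
  -- product equations over ℝ
  have m1 : max (pR + pR') (qR + rR') = 0 := by
    have h3 := ent hAB 0 0
    rw [e00, hp, hp', hq, hr', ← WithBot.coe_add, ← WithBot.coe_add, rb0] at h3
    exact coe_max_eq h3
  have m2 : max (pR + qR') (qR + sR') = b := by
    have h3 := ent hAB 0 1
    rw [e01, hp, hq', hq, hs', ← WithBot.coe_add, ← WithBot.coe_add] at h3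
    exact coe_max_eq h3
  have m3 : max (rR + pR') (sR + rR') = c := by
    have h3 := ent hAB 1 0
    rw [e10, hr, hp', hs, hr', ← WithBot.coe_add, ← WithBot.coe_add] at h3
    exact coe_max_eq h3
  have m4 : max (rR + qR') (sR + sR') = 0 := by
    have h3 := ent hAB 1 1
    rw [e11, hr, hq', hs, hs', ← WithBot.coe_add, ← WithBot.coe_add, rb0] at h3
    exact coe_max_eq h3
  have n1 : max (pR' + pR) (qR' + rR) = 0 := by
    have h3 := ent hBA 0 0
    rw [e00, hp', hp, hq', hr, ← WithBot.coe_add, ← WithBot.coe_add, rb0] at h3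
    exact coe_max_eq h3
  have n2 : max (pR' + qR) (qR' + sR) = b := by
    have h3 := ent hBA 0 1
    rw [e01, hp', hq, hq', hs, ← WithBot.coe_add, ← WithBot.coe_add] at h3
    exact coe_max_eq h3
  have n3 : max (rR' + pR) (sR' + rR) = c := by
    have h3 := ent hBA 1 0
    rw [e10, hr', hp, hs', hr, ← WithBot.coe_add, ← WithBot.coe_add] at h3
    exact coe_max_eq h3
  obtain ⟨m1a, m1b, m1c⟩ := rmax_eq m1
  obtain ⟨m2a, m2b, -⟩ := rmax_eq m2
  obtain ⟨m3a, m3b, -⟩ := rmax_eq m3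
  obtain ⟨m4a, m4b, m4c⟩ := rmax_eq m4
  obtain ⟨n1a, n1b, n1c⟩ := rmax_eq n1
  obtain ⟨n2a, n2b, -⟩ := rmax_eq n2
  obtain ⟨n3a, n3b, -⟩ := rmax_eq n3
  by_cases hpp : pR + pR' = 0
  · -- E-type
    left
    have hqv : qR = pR + b := by linarith
    have hq'v : qR' = pR' + b := by linarith
    have hrv : rR = pR + c := by linarith
    have hr'v : rR' = pR' + c := by linarith
    have hss : sR + sR' = 0 := by
      rcases m4c with h' | h'
      · exfalso; rw [hrv, hq'v] at h'; linarith
      · exact h'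
    have hsv : sR = pR := by linarith
    refine ⟨pR, ?_⟩
    funext i j
    have key : ∀ i j, A i j = sc (↑pR) (EM b c) i j := by
      refine ent_cases _ ?_ ?_ ?_ ?_ <;> simp only [sc, e00, e01, e10, e11]
      · rw [hp, add_zero]
      · rw [hq, ← WithBot.coe_add, WithBot.coe_eq_coe, hqv]
      · rw [hr, ← WithBot.coe_add, WithBot.coe_eq_coe, hrv]
      · rw [hs, add_zero, WithBot.coe_eq_coe, hsv]
    exact key i j
  · -- F-type
    right
    have hqr' : qR + rR' = 0 := by
      rcases m1c with h' | h'
      · exact absurd h' hpp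
      · exact h'
    have hq'r : qR' + rR = 0 := by
      rcases n1c with h' | h'
      · exfalso; exact hpp (by linarith)
      · exact h'
    have hrv : rR = pR - b := by linarith
    have hr'v : rR' = pR' - b := by linarith
    have hqv : qR = b - pR' := by linarith
    have hs0 : pR + pR' = b + c := by linarith
    have hq2 : qR = pR - c := by linarith
    have hsv : sR = pR := by
      have h1 : sR ≤ pR := by linarith
      have h2 : pR ≤ sR := by linarith [iA4]
      linarith
    refine ⟨pR, ?_⟩
    have f00 : FM b c 0 0 = 0 := by simp [FM]
    have f01 : FM b c 0 1 = ↑(-c) := by simp [FM]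
    have f10 : FM b c 1 0 = ↑(-b) := by simp [FM]
    have f11 : FM b c 1 1 = 0 := by simp [FM]
    funext i j
    have key : ∀ i j, A i j = sc (↑pR) (FM b c) i j := by
      refine ent_cases _ ?_ ?_ ?_ ?_ <;> simp only [sc, f00, f01, f10, f11]
      · rw [hp, add_zero]
      · rw [hq, ← WithBot.coe_add, WithBot.coe_eq_coe, hq2]; ring
      · rw [hr, ← WithBot.coe_add, WithBot.coe_eq_coe, hrv]; ring
      · rw [hs, add_zero, WithBot.coe_eq_coe, hsv]
    exact key i j
lemma caseC2a (b c : ℝ) (hbc : b + c < 0) (G : Set Mat2) (hG : IsGroupWith G (EM b c)) :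
    (IsAbelianOn G ∧ IsTorsionFreeOn G (EM b c)) ∨
      (∃ H : Set Mat2, H ⊆ G ∧ IsGroupWith H (EM b c) ∧ IsAbelianOn H ∧
        IsTorsionFreeOn H (EM b c) ∧
        ∃ g ∈ G, g ∉ H ∧ ∀ x ∈ G, x ∈ H ∨ ∃ h ∈ H, x = tMul g h) := by
  have cls := cls2a b c hbc G hG
  have e00 : EM b c 0 0 = 0 := by simp [EM]
  have scEE : ∀ l m : ℝ, tMul (sc ↑l (EM b c)) (sc ↑m (EM b c)) = sc ↑(l + m) (EM b c) := by
    intro l m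
    rw [sc_tMul, tMul_sc, hEEa b c hbc, sc_sc, WithBot.coe_add]
  have scEF : ∀ l m : ℝ, tMul (sc ↑l (EM b c)) (sc ↑m (FM b c)) = sc ↑(l + m) (FM b c) := by
    intro l m
    rw [sc_tMul, tMul_sc, hEFa b c hbc, sc_sc, WithBot.coe_add]
  have scFE : ∀ l m : ℝ, tMul (sc ↑l (FM b c)) (sc ↑m (EM b c)) = sc ↑(l + m) (FM b c) := by
    intro l m
    rw [sc_tMul, tMul_sc, hFEa b c hbc, sc_sc, WithBot.coe_add]
  have scFF : ∀ l m : ℝ,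
      tMul (sc ↑l (FM b c)) (sc ↑m (FM b c)) = sc ↑(l + m + -(b + c)) (EM b c) := by
    intro l m
    rw [sc_tMul, tMul_sc, hFFa b c hbc, sc_sc, sc_sc, ← WithBot.coe_add, ← WithBot.coe_add]
  refine L2 G (EM b c) hG (fun A => ∃ l : ℝ, A = sc ↑l (EM b c))
    ⟨0, (sc_zero (EM b c)).symm⟩ ?_ ?_ ?_ ?_ ?_ ?_
  · rintro A hA B hB ⟨l, rfl⟩ ⟨m, rfl⟩
    rw [scEE]; exact ⟨l + m, rfl⟩
  · intro A hA B hB hDA hDB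
    rcases cls A hA with h | ⟨l, rfl⟩
    · exact absurd h hDA
    rcases cls B hB with h | ⟨m, rfl⟩
    · exact absurd h hDB
    rw [scFF]; exact ⟨l + m + -(b + c), rfl⟩
  · rintro A hA B hB ⟨l, rfl⟩ hDB
    rcases cls B hB with h | ⟨m, rfl⟩
    · exact absurd h hDB
    rw [scEF]
    rintro ⟨x, hx⟩
    exact hEnF hbc x (l + m) hx.symm
  · rintro A hA B hB hDA ⟨m, rfl⟩
    rcases cls A hA with h | ⟨l, rfl⟩
    · exact absurd h hDA
    rw [scFE]
    rintro ⟨x, hx⟩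
    exact hEnF hbc x (l + m) hx.symm
  · rintro A hA B hB ⟨l, rfl⟩ ⟨m, rfl⟩
    rw [scEE, scEE, add_comm l m]
  · rintro A hA ⟨l, rfl⟩ n hpow
    rw [tpow_sc (EM b c) (hEEa b c hbc), rep_coe] at hpow
    have h0 := congrFun (congrFun hpow 0) 0
    rw [e00] at h0
    have h0' : (((n + 1 : ℕ) * l : ℝ) : Rb) + 0 = 0 := h0
    rw [add_zero] at h0'
    have hl : l = 0 := by
      have := WithBot.coe_eq_coe.mp (h0'.trans rb0)
      have hn : ((n : ℝ) + 1) ≠ 0 := by positivity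
      have h2 : ((n:ℝ) + 1) * l = 0 := by push_cast at this ⊢; linarith
      rcases mul_eq_zero.mp h2 with h' | h'
      · exact absurd h' hn
      · exact h'
    rw [hl]
    exact sc_zero (EM b c)

lemma part1 (G : Set Mat2) (E : Mat2) (hGE : IsGroupWith G E) :
    (IsAbelianOn G ∧ IsTorsionFreeOn G E) ∨
      (∃ H : Set Mat2, H ⊆ G ∧ IsGroupWith H E ∧ IsAbelianOn H ∧ IsTorsionFreeOn H E ∧
        ∃ g ∈ G, g ∉ H ∧ ∀ x ∈ G, x ∈ H ∨ ∃ h ∈ H, x = tMul g h) := by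
  have hEE : tMul E E = E := (hGE.2.2.1 E hGE.1).1
  rcases classify E hEE with ⟨u, v, hf⟩ | ⟨b, c, hbc, h1, h2, h3, h4⟩ |
    ⟨b, h1, h2, h3, h4⟩ | ⟨c, h1, h2, h3, h4⟩ | ⟨h1, h2, h3, h4⟩
  · exact Or.inl (L1 G E hGE (caseC1 G E u v hGE hf))
  · have hE : E = EM b c := by
      funext i j
      have key : ∀ i j, E i j = EM b c i j := by
        refine ent_cases _ ?_ ?_ ?_ ?_ <;> simp [EM, h1, h2, h3, h4]
      exact key i j
    rw [hE] at hGE ⊢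
    exact caseC2a b c hbc G hGE
  · exact Or.inl (L1 G E hGE (caseC2b G E b hGE h1 h2 h3 h4))
  · exact Or.inl (L1 G E hGE (caseC2c G E c hGE h1 h2 h3 h4))
  · exact caseC2d G E hGE h1 h2 h3 h4

/-- every subsemigroup of `M₂(ℝ̄)` which is a group under `⊗` is either
torsion-free abelian or contains a torsion-free abelian subgroup of index `2`;
consequently, every abstract group admitting a faithful representation by `2 × 2`
tropical matrices is torsion-free abelian or has a torsion-free abelian subgroup of
index `2`. -/
theorem subgroups_virtually_abelian :
    (∀ (G : Set Mat2) (E : Mat2), IsGroupWith G E →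
      (IsAbelianOn G ∧ IsTorsionFreeOn G E) ∨
        (∃ H : Set Mat2, H ⊆ G ∧ IsGroupWith H E ∧ IsAbelianOn H ∧ IsTorsionFreeOn H E ∧
          ∃ g ∈ G, g ∉ H ∧ ∀ x ∈ G, x ∈ H ∨ ∃ h ∈ H, x = tMul g h)) ∧
    (∀ (Γ : Type) [inst : Group Γ],
      (∃ f : Γ → Mat2, Function.Injective f ∧ ∀ a b : Γ, f (a * b) = tMul (f a) (f b)) →
        ((∀ a b : Γ, a * b = b * a) ∧ Monoid.IsTorsionFree Γ) ∨
          (∃ H : Subgroup Γ, H.index = 2 ∧ (∀ a b : H, a * b = b * a) ∧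
            Monoid.IsTorsionFree H)) := by
  refine ⟨part1, ?_⟩
  intro Γ inst ⟨f, hinj, hmul⟩
  set G : Set Mat2 := Set.range f with hGdef
  set E : Mat2 := f 1 with hEdef
  have hG : IsGroupWith G E := by
    refine ⟨⟨1, rfl⟩, ?_, ?_, ?_⟩
    · rintro A ⟨a, rfl⟩ B ⟨b, rfl⟩
      exact ⟨a * b, hmul a b⟩
    · rintro A ⟨a, rfl⟩
      constructor
      · rw [← hmul, one_mul]
      · rw [← hmul, mul_one]
    · rintro A ⟨a, rfl⟩
      refine ⟨f a⁻¹, ⟨a⁻¹, rfl⟩, ?_, ?_⟩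
      · rw [← hmul, mul_inv_cancel]
      · rw [← hmul, inv_mul_cancel]
  have hpow : ∀ (g : Γ) (n : ℕ), tpow (f g) n = f (g ^ (n + 1)) := by
    intro g n
    induction n with
    | zero => rw [pow_one]; rfl
    | succ n ih => rw [tpow, ih, ← hmul, ← pow_succ']
  -- inverse images are inverses
  have hinvmem : ∀ (H : Set Mat2), IsGroupWith H E → H ⊆ G → ∀ a : Γ, f a ∈ H → f a⁻¹ ∈ H := by
    intro H hHgrp hHG a ha
    obtain ⟨B, hBH, hfaB, hBfa⟩ := hHgrp.2.2.2 (f a) ha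
    have : f a⁻¹ = B := by
      calc f a⁻¹ = tMul E (f a⁻¹) := by rw [hEdef, ← hmul, one_mul]
        _ = tMul (tMul B (f a)) (f a⁻¹) := by rw [hBfa]
        _ = tMul B (tMul (f a) (f a⁻¹)) := tMul_assoc _ _ _
        _ = tMul B E := by rw [← hmul, mul_inv_cancel, hEdef]
        _ = B := (hG.2.2.1 B (hHG hBH)).2
    rw [this]; exact hBH
  rcases part1 G E hG with ⟨hab, htf⟩ | ⟨H, hHG, hHgrp, hHab, hHtf, g0, hg0G, hg0H, hcoset⟩
  · left
    constructor
    · intro a b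
      apply hinj
      rw [hmul, hmul, hab (f a) ⟨a, rfl⟩ (f b) ⟨b, rfl⟩]
    · intro g hg hford
      obtain ⟨n, hn, hgn⟩ := isOfFinOrder_iff_pow_eq_one.mp hford
      cases n with
      | zero => exact absurd hn (by norm_num)
      | succ m =>
        apply hg
        apply hinj
        have : tpow (f g) m = E := by rw [hpow, hgn, hEdef]
        exact htf (f g) ⟨g, rfl⟩ m this
  · right
    refine ⟨{ carrier := {a | f a ∈ H},
              one_mem' := by show f 1 ∈ H; rw [← hEdef]; exact hHgrp.1,
              mul_mem' := by
                intro a b ha hb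
                show f (a * b) ∈ H
                rw [hmul]; exact hHgrp.2.1 (f a) ha (f b) hb,
              inv_mem' := by
                intro a ha
                exact hinvmem H hHgrp hHG a ha }, ?_, ?_, ?_⟩
    · -- index 2
      rw [Subgroup.index_eq_two_iff]
      obtain ⟨c0, hc0⟩ := hg0G
      refine ⟨c0, fun b => ?_⟩
      by_cases hb : f b ∈ H
      · refine Or.inr ⟨hb, fun hbc => ?_⟩
        -- b * c0 ∈ H' and b ∈ H' would give g0 ∈ H
        have hbinv : f b⁻¹ ∈ H := hinvmem H hHgrp hHG b hb
        have : f c0 ∈ H := by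
          have : f (b⁻¹ * (b * c0)) ∈ H := by
            rw [hmul]
            exact hHgrp.2.1 _ hbinv _ hbc
          rwa [inv_mul_cancel_left] at this
        rw [hc0] at this
        exact hg0H this
      · refine Or.inl ⟨?_, hb⟩
        show f (b * c0) ∈ H
        rcases hcoset (f b) ⟨b, rfl⟩ with hfb | ⟨h, hhH, hfb⟩
        · exact absurd hfb hb
        rcases hcoset (f (b * c0)) ⟨b * c0, rfl⟩ with hfbc | ⟨h', hh'H, hfbc⟩
        · exact hfbc
        · exfalso
          obtain ⟨d, hd⟩ := hHG hhH
          obtain ⟨d', hd'⟩ := hHG hh'H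
          rw [← hd, ← hc0, ← hmul] at hfb
          rw [← hd', ← hc0, ← hmul] at hfbc
          have hb1 : b = c0 * d := hinj hfb
          have hb2 : b * c0 = c0 * d' := hinj hfbc
          have hc0v : c0 = d⁻¹ * d' := by
            have h3 : c0 * (d * c0) = c0 * d' := by rw [← mul_assoc, ← hb1]; exact hb2
            have h4 : d * c0 = d' := mul_left_cancel h3
            rw [← h4]; group
          have hfd : f d ∈ H := by rw [hd]; exact hhH
          have hfd' : f d' ∈ H := by rw [hd']; exact hh'H
          have : f c0 ∈ H := by
            rw [hc0v, hmul]
            exact hHgrp.2.1 _ (hinvmem H hHgrp hHG d hfd) _ hfd'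
          rw [hc0] at this
          exact hg0H this
    · intro a b
      have := hHab (f ↑a) a.2 (f ↑b) b.2
      rw [← hmul, ← hmul] at this
      have h2 := hinj this
      exact Subtype.ext h2
    · intro g hg hford
      obtain ⟨n, hn, hgn⟩ := isOfFinOrder_iff_pow_eq_one.mp hford
      cases n with
      | zero => exact absurd hn (by norm_num)
      | succ m =>
        apply hg
        have hgn' : (g : Γ) ^ (m + 1) = 1 := by
          have := congrArg (Subtype.val) hgn
          push_cast at this
          exact this
        have : tpow (f ↑g) m = E := by rw [hpow, hgn', hEdef]
        have hfg : f ↑g = E := hHtf (f ↑g) g.2 m this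
        have : (g : Γ) = 1 := hinj (hfg.trans hEdef)
        exact Subtype.ext this
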